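/- arXiv:2303.05365 — 2 statements merged into one kernel-verified Lean document; each statement's English description precedes it below -/
import Mathlib

section
/- The product of two associated Legendre polynomials P_ℓ^m(z) and P_{ℓ'}^{m'}(z) on [-1,1] can be written as a linear combination of associated Legendre polynomials P_{ℓ̃}^{m̃}(z) with degrees ℓ̃ ≤ ℓ + ℓ' and orders 0 ≤ m̃ ≤ ℓ̃. Equivalently, the function z ↦ P_ℓ^m(z)·P_{ℓ'}^{m'}(z) lies in the span of {P_{ℓ̃}^{m̃} : ℓ̃ ≤ ℓ+ℓ', 0 ≤ m̃ ≤ ℓ̃}. -/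
open Real

/-- The Legendre polynomial `P_ℓ(z) = 1/(2^ℓ ℓ!) dℓ/dzℓ [(z²-1)^ℓ]`. -/
noncomputable def legP (ℓ : ℕ) (z : ℝ) : ℝ :=
  (1 / (2 ^ ℓ * (Nat.factorial ℓ : ℝ))) *
    iteratedDeriv ℓ (fun y : ℝ => (y ^ 2 - 1) ^ ℓ) z

/-- The associated Legendre polynomial
`P_ℓ^m(z) = (-1)^m (1-z²)^{m/2} dᵐ/dzᵐ P_ℓ(z)` for `0 ≤ m ≤ ℓ`. -/
noncomputable def assocLegP (ℓ m : ℕ) (z : ℝ) : ℝ :=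
  (-1 : ℝ) ^ m * (Real.sqrt (1 - z ^ 2)) ^ m * iteratedDeriv m (legP ℓ) z


noncomputable def legPoly (ℓ : ℕ) : Polynomial ℝ :=
  Polynomial.C (1 / (2 ^ ℓ * (Nat.factorial ℓ : ℝ))) *
    Polynomial.derivative^[ℓ] ((Polynomial.X ^ 2 - 1) ^ ℓ)

lemma iteratedDeriv_eval (p : Polynomial ℝ) (n : ℕ) :
    iteratedDeriv n (fun x => p.eval x) = fun x => (Polynomial.derivative^[n] p).eval x := by
  induction n with
  | zero => simp
  | succ n ih =>
    rw [iteratedDeriv_succ, ih]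
    funext x
    rw [Function.iterate_succ_apply']
    exact Polynomial.deriv _

lemma iterDeriv_pow_facts (ℓ j : ℕ) (hj : j ≤ 2 * ℓ) :
    (Polynomial.derivative^[j] ((Polynomial.X ^ 2 - 1 : Polynomial ℝ) ^ ℓ)).natDegree = 2 * ℓ - j ∧
      (Polynomial.derivative^[j] ((Polynomial.X ^ 2 - 1 : Polynomial ℝ) ^ ℓ)).coeff (2 * ℓ - j) ≠ 0 := by
  set q : Polynomial ℝ := (Polynomial.X ^ 2 - 1) ^ ℓ with hq
  have hmono : q.Monic := by
    apply Polynomial.Monic.pow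
    have : (Polynomial.X ^ 2 - 1 : Polynomial ℝ) = Polynomial.X ^ 2 + Polynomial.C (-1) := by ring_nf; simp [Polynomial.C_neg]; ring
    rw [this]
    exact Polynomial.monic_X_pow_add_C _ (by norm_num)
  have hdeg : q.natDegree = 2 * ℓ := by
    rw [hq, Polynomial.natDegree_pow]
    have : (Polynomial.X ^ 2 - 1 : Polynomial ℝ).natDegree = 2 := by
      compute_degree!
    rw [this]; ring
  have hcoeff : (Polynomial.derivative^[j] q).coeff (2 * ℓ - j) ≠ 0 := by
    rw [Polynomial.coeff_iterate_derivative]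
    have h1 : 2 * ℓ - j + j = 2 * ℓ := by omega
    rw [h1]
    have h2 : q.coeff (2 * ℓ) = 1 := by
      rw [← hdeg]; exact hmono.coeff_natDegree
    rw [h2]
    have hd : (2 * ℓ).descFactorial j ≠ 0 := by
      intro h
      rw [Nat.descFactorial_eq_zero_iff_lt] at h
      omega
    simpa using hd
  refine ⟨le_antisymm ?_ (Polynomial.le_natDegree_of_ne_zero hcoeff), hcoeff⟩
  calc (Polynomial.derivative^[j] q).natDegree ≤ q.natDegree - j :=
        Polynomial.natDegree_iterate_derivative _ _
    _ = 2 * ℓ - j := by rw [hdeg]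

lemma iterDeriv_legPoly_facts (ℓ k : ℕ) (hk : k ≤ ℓ) :
    (Polynomial.derivative^[k] (legPoly ℓ)).natDegree = ℓ - k ∧
      Polynomial.derivative^[k] (legPoly ℓ) ≠ 0 := by
  have hc : (1 / (2 ^ ℓ * (Nat.factorial ℓ : ℝ))) ≠ 0 := by
    positivity
  have heq : Polynomial.derivative^[k] (legPoly ℓ) =
      Polynomial.C (1 / (2 ^ ℓ * (Nat.factorial ℓ : ℝ))) *
        Polynomial.derivative^[ℓ + k] ((Polynomial.X ^ 2 - 1) ^ ℓ) := by
    rw [legPoly, Polynomial.iterate_derivative_C_mul, ← Function.iterate_add_apply,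
      Nat.add_comm k ℓ]
  obtain ⟨hdeg, hcoeff⟩ := iterDeriv_pow_facts ℓ (ℓ + k) (by omega)
  have hne : Polynomial.derivative^[ℓ + k] ((Polynomial.X ^ 2 - 1 : Polynomial ℝ) ^ ℓ) ≠ 0 := by
    intro h; rw [h] at hcoeff; simp at hcoeff
  constructor
  · rw [heq, Polynomial.natDegree_C_mul hc, hdeg]; omega
  · rw [heq]
    exact mul_ne_zero (by simpa using hc) hne

lemma span_poly (f : ℕ → Polynomial ℝ) (hf : ∀ i, (f i).natDegree = i) (h0 : ∀ i, f i ≠ 0) :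
    ∀ n (P : Polynomial ℝ), P.natDegree ≤ n →
      ∃ a : ℕ → ℝ, P = ∑ i ∈ Finset.range (n + 1), Polynomial.C (a i) * f i := by
  intro n
  induction n with
  | zero =>
    intro P hP
    have hP0 : P = Polynomial.C (P.coeff 0) := Polynomial.eq_C_of_natDegree_le_zero hP
    have hf0 : f 0 = Polynomial.C ((f 0).coeff 0) := Polynomial.eq_C_of_natDegree_le_zero (hf 0).le
    have hne : (f 0).coeff 0 ≠ 0 := by
      intro h; apply h0 0; rw [hf0, h, map_zero]
    refine ⟨fun _ => P.coeff 0 / (f 0).coeff 0, ?_⟩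
    rw [Finset.sum_range_one, ← Polynomial.coeff_C_zero (a := (f 0).coeff 0 )]
    set u := (f 0).coeff 0 with hu
    rw [hf0, ← Polynomial.C_mul]
    rw [Polynomial.coeff_C_zero, div_mul_cancel₀ _ hne, ← hP0]
  | succ n ih =>
    intro P hP
    set b : ℝ := P.coeff (n + 1) / (f (n + 1)).leadingCoeff with hb
    set P' : Polynomial ℝ := P - Polynomial.C b * f (n + 1) with hP'
    have hlc : (f (n + 1)).leadingCoeff ≠ 0 := Polynomial.leadingCoeff_ne_zero.mpr (h0 _)
    have hcoeffn1 : P'.coeff (n + 1) = 0 := by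
      rw [hP']
      simp only [Polynomial.coeff_sub, Polynomial.coeff_C_mul]
      have : (f (n + 1)).coeff (n + 1) = (f (n + 1)).leadingCoeff := by
        rw [Polynomial.leadingCoeff, hf]
      rw [this, hb, div_mul_cancel₀ _ hlc, sub_self]
    have hdeg' : P'.natDegree ≤ n := by
      rw [Polynomial.natDegree_le_iff_coeff_eq_zero]
      intro j hj
      rcases eq_or_lt_of_le (Nat.succ_le_of_lt hj) with h | h
      · rw [← h]; exact hcoeffn1
      · apply Polynomial.coeff_eq_zero_of_natDegree_lt
        apply lt_of_le_of_lt _ h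
        apply le_trans (Polynomial.natDegree_sub_le _ _)
        simp only [max_le_iff]
        constructor
        · exact hP
        · exact le_trans (Polynomial.natDegree_C_mul_le _ _) (hf _).le
    obtain ⟨a, ha⟩ := ih P' hdeg'
    refine ⟨fun i => if i = n + 1 then b else a i, ?_⟩
    rw [Finset.sum_range_succ]
    have hite : (if n + 1 = n + 1 then b else a (n + 1)) = b := if_pos rfl
    beta_reduce
    rw [hite]
    have : ∑ i ∈ Finset.range (n + 1), Polynomial.C (if i = n + 1 then b else a i) * f i =
        ∑ i ∈ Finset.range (n + 1), Polynomial.C (a i) * f i := by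
      apply Finset.sum_congr rfl
      intro i hi
      rw [Finset.mem_range] at hi
      rw [if_neg (by omega)]
    rw [this, ← ha, hP']
    ring

lemma legP_eq_eval (ℓ : ℕ) : legP ℓ = fun z => (legPoly ℓ).eval z := by
  funext z
  unfold legP legPoly
  have h : (fun y : ℝ => (y ^ 2 - 1) ^ ℓ) =
      fun y => (((Polynomial.X : Polynomial ℝ) ^ 2 - 1) ^ ℓ).eval y := by
    funext y; simp
  rw [h, iteratedDeriv_eval]
  simp

lemma iteratedDeriv_legP (ℓ m : ℕ) (z : ℝ) :
    iteratedDeriv m (legP ℓ) z = (Polynomial.derivative^[m] (legPoly ℓ)).eval z := by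
  rw [legP_eq_eval, iteratedDeriv_eval]

/-- The product of two associated Legendre polynomials on `[-1,1]` is a linear
combination of associated Legendre polynomials `P_{ℓ̃}^{m̃}` with `ℓ̃ ≤ ℓ + ℓ'`,
`0 ≤ m̃ ≤ ℓ̃`. -/
theorem assocLegP_mul_mem_span (ℓ ℓ' m m' : ℕ) (hm : m ≤ ℓ) (hm' : m' ≤ ℓ') :
    ∃ c : ℕ → ℕ → ℝ, ∀ z ∈ Set.Icc (-1 : ℝ) 1,
      assocLegP ℓ m z * assocLegP ℓ' m' z =
        ∑ l ∈ Finset.range (ℓ + ℓ' + 1), ∑ k ∈ Finset.range (l + 1),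
          c l k * assocLegP l k z := by
  classical
  set N := ℓ + ℓ' with hN
  set q : Polynomial ℝ :=
    Polynomial.derivative^[m] (legPoly ℓ) * Polynomial.derivative^[m'] (legPoly ℓ') with hqdef
  have hq : q.natDegree ≤ (ℓ - m) + (ℓ' - m') := by
    refine le_trans (Polynomial.natDegree_mul_le) ?_
    rw [(iterDeriv_legPoly_facts ℓ m hm).1, (iterDeriv_legPoly_facts ℓ' m' hm').1]
  have hX2 : ((1 : Polynomial ℝ) - Polynomial.X ^ 2).natDegree ≤ 2 := by
    compute_degree
  -- general sqrt facts
  have hsq : ∀ z ∈ Set.Icc (-1:ℝ) 1, Real.sqrt (1 - z ^ 2) ^ 2 = 1 - z ^ 2 := by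
    intro z hz
    rw [Real.sq_sqrt]
    nlinarith [hz.1, hz.2]
  -- LHS as polynomial-times-sqrt-power
  have hLHS : ∀ z : ℝ, assocLegP ℓ m z * assocLegP ℓ' m' z =
      (-1 : ℝ) ^ (m + m') * (Real.sqrt (1 - z ^ 2)) ^ (m + m') * q.eval z := by
    intro z
    unfold assocLegP
    rw [iteratedDeriv_legP, iteratedDeriv_legP, hqdef, Polynomial.eval_mul,
      pow_add, pow_add]
    ring
  rcases Nat.even_or_odd (m + m') with ⟨t, ht⟩ | ⟨t, ht⟩
  · -- even case
    set P : Polynomial ℝ :=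
      Polynomial.C ((-1:ℝ) ^ (m + m')) *
        (((1 : Polynomial ℝ) - Polynomial.X ^ 2) ^ t * q) with hPdef
    have hP : P.natDegree ≤ N := by
      refine le_trans (Polynomial.natDegree_C_mul_le _ _) ?_
      refine le_trans (Polynomial.natDegree_mul_le) ?_
      have h1 : (((1 : Polynomial ℝ) - Polynomial.X ^ 2) ^ t).natDegree ≤ t * 2 :=
        le_trans (Polynomial.natDegree_pow_le) (by exact Nat.mul_le_mul_left t hX2)
      omega
    obtain ⟨a, ha⟩ := span_poly legPoly
      (fun i => by simpa using (iterDeriv_legPoly_facts i 0 (Nat.zero_le _)).1)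
      (fun i => by simpa using (iterDeriv_legPoly_facts i 0 (Nat.zero_le _)).2) N P hP
    refine ⟨fun l k => if k = 0 then a l else 0, ?_⟩
    intro z hz
    have hsqt : (Real.sqrt (1 - z ^ 2)) ^ (m + m') = (1 - z ^ 2) ^ t := by
      rw [ht, ← two_mul, pow_mul, hsq z hz]
    have hevalP : P.eval z = assocLegP ℓ m z * assocLegP ℓ' m' z := by
      rw [hLHS z, hsqt, hPdef]
      simp only [Polynomial.eval_mul, Polynomial.eval_pow, Polynomial.eval_C,
        Polynomial.eval_sub, Polynomial.eval_one, Polynomial.eval_X]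
      ring
    rw [← hevalP, ha]
    rw [Polynomial.eval_finset_sum]
    refine Finset.sum_congr rfl ?_
    intro l _
    rw [Finset.sum_eq_single 0]
    · have : assocLegP l 0 z = (legPoly l).eval z := by
        unfold assocLegP
        rw [iteratedDeriv_legP]
        simp
      rw [this]
      simp
    · intro k _ hk0; simp only [if_neg hk0, zero_mul]
    · intro h; exact absurd (Finset.mem_range.mpr (Nat.succ_pos l)) h
  · -- odd case
    have hN1 : 1 ≤ N := by omega
    set f : ℕ → Polynomial ℝ := fun i => Polynomial.derivative (legPoly (i + 1)) with hfdef
    have hfd : ∀ i, (f i).natDegree = i := by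
      intro i
      have := (iterDeriv_legPoly_facts (i + 1) 1 (by omega)).1
      simpa [hfdef] using this
    have hfn : ∀ i, f i ≠ 0 := by
      intro i
      have := (iterDeriv_legPoly_facts (i + 1) 1 (by omega)).2
      simpa [hfdef] using this
    set P : Polynomial ℝ :=
      Polynomial.C ((-1:ℝ) ^ (m + m' + 1)) *
        (((1 : Polynomial ℝ) - Polynomial.X ^ 2) ^ t * q) with hPdef
    have hP : P.natDegree ≤ N - 1 := by
      refine le_trans (Polynomial.natDegree_C_mul_le _ _) ?_
      refine le_trans (Polynomial.natDegree_mul_le) ?_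
      have h1 : (((1 : Polynomial ℝ) - Polynomial.X ^ 2) ^ t).natDegree ≤ t * 2 :=
        le_trans (Polynomial.natDegree_pow_le) (by exact Nat.mul_le_mul_left t hX2)
      omega
    obtain ⟨a, ha⟩ := span_poly f hfd hfn (N - 1) P hP
    rw [Nat.sub_add_cancel hN1] at ha
    refine ⟨fun l k => if k = 1 ∧ 1 ≤ l then a (l - 1) else 0, ?_⟩
    intro z hz
    have hsqt : (Real.sqrt (1 - z ^ 2)) ^ (m + m') =
        (1 - z ^ 2) ^ t * Real.sqrt (1 - z ^ 2) := by
      rw [ht, pow_succ, pow_mul, hsq z hz]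
    -- simplify inner sums
    have hinner : ∀ l, ∑ k ∈ Finset.range (l + 1),
        (if k = 1 ∧ 1 ≤ l then a (l - 1) else 0) * assocLegP l k z =
        if 1 ≤ l then a (l - 1) * assocLegP l 1 z else 0 := by
      intro l
      rcases Nat.eq_zero_or_pos l with hl | hl
      · subst hl
        simp
      · have hl1 : 1 ≤ l := hl
        rw [if_pos hl1, Finset.sum_eq_single 1]
        · rw [if_pos ⟨rfl, hl1⟩]
        · intro k _ hk1
          rw [if_neg (by tauto), zero_mul]
        · intro h; exact absurd (Finset.mem_range.mpr (by omega)) h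
    have hassoc1 : ∀ j : ℕ, assocLegP (j + 1) 1 z =
        -(Real.sqrt (1 - z ^ 2)) * (f j).eval z := by
      intro j
      unfold assocLegP
      rw [iteratedDeriv_legP]
      simp [hfdef]
    calc assocLegP ℓ m z * assocLegP ℓ' m' z
        = (-1 : ℝ) ^ (m + m') * ((1 - z ^ 2) ^ t * Real.sqrt (1 - z ^ 2)) * q.eval z := by
          rw [hLHS z, hsqt]
      _ = -(Real.sqrt (1 - z ^ 2)) * P.eval z := by
          rw [hPdef]
          simp [Polynomial.eval_mul, Polynomial.eval_pow, pow_succ]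
          ring
      _ = ∑ j ∈ Finset.range N, a j * assocLegP (j + 1) 1 z := by
          rw [ha, Polynomial.eval_finset_sum, Finset.mul_sum]
          refine Finset.sum_congr rfl ?_
          intro j _
          rw [hassoc1 j]
          simp
          ring
      _ = ∑ l ∈ Finset.range (N + 1),
            (if 1 ≤ l then a (l - 1) * assocLegP l 1 z else 0) := by
          rw [Finset.sum_range_succ']
          simp
      _ = ∑ l ∈ Finset.range (N + 1), ∑ k ∈ Finset.range (l + 1),
            (if k = 1 ∧ 1 ≤ l then a (l - 1) else 0) * assocLegP l k z := by
          refine Finset.sum_congr rfl ?_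
          intro l _
          rw [hinner l]
end

section
/- The associated Legendre polynomials satisfy the three-term recurrence (ℓ - m + 1) P_{ℓ+1}^m(z) = (2ℓ+1) z P_ℓ^m(z) - (ℓ+m) P_{ℓ-1}^m(z) for all z ∈ [-1,1], ℓ ≥ 1 and 0 ≤ m ≤ ℓ-1. -/
open Real

open Real Polynomial

/-- Legendre polynomials via Bonnet recurrence. -/
noncomputable def Qleg : ℕ → ℝ[X]
  | 0 => 1
  | 1 => X
  | (n+2) => C ((2*(n:ℝ)+3)/((n:ℝ)+2)) * (X * Qleg (n+1)) - C (((n:ℝ)+1)/((n:ℝ)+2)) * Qleg n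

lemma bonnet (n : ℕ) : C ((n:ℝ)+2) * Qleg (n+2)
    = C (2*(n:ℝ)+3) * (X * Qleg (n+1)) - C ((n:ℝ)+1) * Qleg n := by
  have h : ((n:ℝ)+2) ≠ 0 := by positivity
  have hd1 : C ((2*(n:ℝ)+3)/((n:ℝ)+2)) = C (2*(n:ℝ)+3) * C (((n:ℝ)+2)⁻¹) := by
    rw [← C_mul, div_eq_mul_inv]
  have hd2 : C (((n:ℝ)+1)/((n:ℝ)+2)) = C ((n:ℝ)+1) * C (((n:ℝ)+2)⁻¹) := by
    rw [← C_mul, div_eq_mul_inv]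
  have hinv : C ((n:ℝ)+2) * C (((n:ℝ)+2)⁻¹) = 1 := by
    rw [← C_mul, mul_inv_cancel₀ h, C_1]
  rw [Qleg, hd1, hd2]
  linear_combination (C (2*(n:ℝ)+3) * (X * Qleg (n+1)) - C ((n:ℝ)+1) * Qleg n) * hinv

/-- The two key derivative identities, by joint induction. -/
lemma AB (n : ℕ) :
    derivative (Qleg (n+1)) = X * derivative (Qleg n) + C ((n:ℝ)+1) * Qleg n ∧
    X * derivative (Qleg (n+1)) - derivative (Qleg n) = C ((n:ℝ)+1) * Qleg (n+1) := by
  induction n with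
  | zero => constructor <;> simp [Qleg]
  | succ n ih =>
    obtain ⟨hA, hB⟩ := ih
    have hC : C ((n:ℝ)+2) ≠ 0 := C_ne_zero.mpr (by positivity)
    have iv : ((X:ℝ[X])^2 - 1) * derivative (Qleg (n+1))
        = C ((n:ℝ)+1) * (X * Qleg (n+1) - Qleg n) := by
      linear_combination X * hB - hA
    have hdb := congrArg derivative (bonnet n)
    simp only [derivative_mul, derivative_C, derivative_X, derivative_sub, zero_mul, one_mul,
      zero_add] at hdb
    have hbn := bonnet n
    have hA1 : derivative (Qleg (n+2)) = X * derivative (Qleg (n+1)) + C ((n:ℝ)+2) * Qleg (n+1) := by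
      apply mul_left_cancel₀ hC
      simp only [map_add, map_mul, map_sub, map_one, map_ofNat] at hdb hB ⊢
      linear_combination hdb + (C (n:ℝ) + 1) * hB
    constructor
    · push_cast at hA1 ⊢
      simp only [map_add, map_mul, map_sub, map_one, map_ofNat] at hA1 ⊢
      linear_combination hA1
    · apply mul_left_cancel₀ hC
      push_cast at hA1 iv hbn ⊢
      simp only [map_add, map_mul, map_sub, map_one, map_ofNat] at hA1 iv hbn ⊢
      linear_combination (C (n:ℝ)+2) * X * hA1 + (C (n:ℝ)+2) * iv - (C (n:ℝ)+2) * hbn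

lemma ivQ (n : ℕ) : ((X:ℝ[X])^2 - 1) * derivative (Qleg (n+1))
    = C ((n:ℝ)+1) * (X * Qleg (n+1) - Qleg n) := by
  obtain ⟨hA, hB⟩ := AB n
  linear_combination X * hB - hA

lemma derivC (n : ℕ) : derivative (Qleg (n+2))
    = derivative (Qleg n) + C (2*(n:ℝ)+3) * Qleg (n+1) := by
  obtain ⟨hA1, _⟩ := AB (n+1)
  obtain ⟨_, hB⟩ := AB n
  push_cast at hA1 hB ⊢
  simp only [map_add, map_mul, map_sub, map_one, map_ofNat] at hA1 hB ⊢
  linear_combination hA1 + hB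

/-- Leibniz: iterated derivative of X * p. -/
lemma L1 (p : ℝ[X]) (k : ℕ) : derivative^[k+1] (X * p)
    = X * derivative^[k+1] p + C ((k:ℝ)+1) * derivative^[k] p := by
  induction k generalizing p with
  | zero =>
    simp only [Function.iterate_one, Function.iterate_zero, id_eq, derivative_mul, derivative_X,
      one_mul, Nat.cast_zero, zero_add, map_one]
    ring
  | succ k ih =>
    rw [Function.iterate_succ_apply', ih, derivative_add, derivative_C_mul, derivative_mul,
      derivative_X]
    simp only [← Function.iterate_succ_apply']
    push_cast
    simp only [map_add, map_mul, map_sub, map_one, map_ofNat] 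
    ring

/-- Leibniz: iterated derivative of (X²-1) * p. -/
lemma L2 (p : ℝ[X]) (k : ℕ) : derivative^[k+2] (((X:ℝ[X])^2-1) * p)
    = ((X:ℝ[X])^2-1) * derivative^[k+2] p + C (2*((k:ℝ)+2)) * (X * derivative^[k+1] p)
      + C (((k:ℝ)+2)*((k:ℝ)+1)) * derivative^[k] p := by
  induction k generalizing p with
  | zero =>
    simp only [Function.iterate_succ, Function.iterate_zero, Function.comp_apply, id_eq,
      Function.iterate_one]
    simp only [derivative_mul, derivative_sub, derivative_X_pow, derivative_X, derivative_one,
      derivative_add, derivative_C]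
    push_cast
    norm_num
    simp only [map_ofNat]
    ring
  | succ k ih =>
    rw [Function.iterate_succ_apply', ih]
    simp only [derivative_add, derivative_mul, derivative_sub, derivative_X_pow, derivative_X,
      derivative_one, derivative_C, one_mul, zero_mul, zero_add]
    simp only [← Function.iterate_succ_apply']
    push_cast
    simp only [map_add, map_mul, map_sub, map_one, map_ofNat]
    ring

/-- first derivative of (X²-1)^(n+1). -/
lemma dpow (n : ℕ) : derivative (((X:ℝ[X])^2-1)^(n+1))
    = C (2*((n:ℝ)+1)) * (X * ((X:ℝ[X])^2-1)^n) := by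
  rw [derivative_pow]
  simp only [derivative_sub, derivative_X_pow, derivative_one, Nat.add_sub_cancel]
  push_cast
  simp only [map_add, map_mul, map_sub, map_one, map_ofNat]
  ring

lemma keyA (m : ℕ) : ((X:ℝ[X])^2 - 1) * derivative^[m+2] (((X:ℝ[X])^2-1)^(m+1))
    = C (((m:ℝ)+1)*((m:ℝ)+2)) * derivative^[m] (((X:ℝ[X])^2-1)^(m+1)) := by
  have w1 : derivative^[m+2] (((X:ℝ[X])^2-1)^(m+2))
      = C (2*((m:ℝ)+2)) * (X * derivative^[m+1] (((X:ℝ[X])^2-1)^(m+1))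
          + C ((m:ℝ)+1) * derivative^[m] (((X:ℝ[X])^2-1)^(m+1))) := by
    have h0 : derivative^[m+2] (((X:ℝ[X])^2-1)^(m+2))
        = derivative^[m+1] (derivative (((X:ℝ[X])^2-1)^(m+2))) := by
      rw [← Function.iterate_succ_apply]
    rw [h0, dpow (m+1), iterate_derivative_C_mul, L1]
    push_cast
    simp only [map_add, map_mul, map_sub, map_one, map_ofNat]
    ring
  have w2 : derivative^[m+2] (((X:ℝ[X])^2-1)^(m+2))
      = ((X:ℝ[X])^2-1) * derivative^[m+2] (((X:ℝ[X])^2-1)^(m+1))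
        + C (2*((m:ℝ)+2)) * (X * derivative^[m+1] (((X:ℝ[X])^2-1)^(m+1)))
        + C (((m:ℝ)+2)*((m:ℝ)+1)) * derivative^[m] (((X:ℝ[X])^2-1)^(m+1)) := by
    rw [show ((X:ℝ[X])^2-1)^(m+2) = ((X:ℝ[X])^2-1) * ((X:ℝ[X])^2-1)^(m+1) from (pow_succ' _ _)]
    exact L2 _ m
  push_cast at w1 w2 ⊢
  simp only [map_add, map_mul, map_sub, map_one, map_ofNat] at w1 w2 ⊢
  linear_combination w1 - w2

lemma starQ (n : ℕ) : derivative^[n+1] (((X:ℝ[X])^2-1)^(n+1))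
    = C 2 * (((X:ℝ[X])^2-1) * derivative^[n+1] (((X:ℝ[X])^2-1)^n))
      + C (2*((n:ℝ)+1)) * (X * derivative^[n] (((X:ℝ[X])^2-1)^n)) := by
  cases n with
  | zero =>
    simp
    exact one_add_one_eq_two.trans (map_ofNat C 2).symm
  | succ m =>
    have w2 : derivative^[m+2] (((X:ℝ[X])^2-1)^(m+2))
        = ((X:ℝ[X])^2-1) * derivative^[m+2] (((X:ℝ[X])^2-1)^(m+1))
          + C (2*((m:ℝ)+2)) * (X * derivative^[m+1] (((X:ℝ[X])^2-1)^(m+1)))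
          + C (((m:ℝ)+2)*((m:ℝ)+1)) * derivative^[m] (((X:ℝ[X])^2-1)^(m+1)) := by
      rw [show ((X:ℝ[X])^2-1)^(m+2) = ((X:ℝ[X])^2-1) * ((X:ℝ[X])^2-1)^(m+1) from (pow_succ' _ _)]
      exact L2 _ m
    have ka := keyA m
    push_cast at w2 ka ⊢
    simp only [map_add, map_mul, map_sub, map_one, map_ofNat] at w2 ka ⊢
    linear_combination w2 - ka

/-- Rodrigues formula. -/
lemma rodrigues (n : ℕ) : derivative^[n] (((X:ℝ[X])^2-1)^n)
    = C ((2:ℝ)^n * n.factorial) * Qleg n := by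
  induction n with
  | zero => simp [Qleg]
  | succ n ih =>
    have hs := starQ n
    have key : C 2 * (((X:ℝ[X])^2-1) * derivative (Qleg n)) + C (2*((n:ℝ)+1)) * (X * Qleg n)
        = C (2*((n:ℝ)+1)) * Qleg (n+1) := by
      cases n with
      | zero => simp [Qleg]
      | succ m =>
        have hiv := ivQ m
        have hbn := bonnet m
        simp only [show m+1+1 = m+2 from rfl]
        push_cast at hiv hbn ⊢
        simp only [map_add, map_mul, map_sub, map_one, map_ofNat] at hiv hbn ⊢
        linear_combination 2 * hiv - 2 * hbn
    have hd : derivative^[n+1] (((X:ℝ[X])^2-1)^n)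
        = derivative (derivative^[n] (((X:ℝ[X])^2-1)^n)) := Function.iterate_succ_apply' _ _ _
    rw [hs, hd, ih, derivative_C_mul]
    rw [show (n+1).factorial = (n+1) * n.factorial from rfl]
    push_cast at key ⊢
    simp only [map_add, map_mul, map_sub, map_one, map_ofNat, map_pow] at key ⊢
    linear_combination ((2:ℝ[X]))^n * C ((n.factorial:ℝ)) * key

/-- The m-times differentiated recurrence, at polynomial level. -/
lemma polyRec (k m : ℕ) : C ((k:ℝ)+2-(m:ℝ)) * derivative^[m] (Qleg (k+2))
    = C (2*(k:ℝ)+3) * (X * derivative^[m] (Qleg (k+1)))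
      - C ((k:ℝ)+1+(m:ℝ)) * derivative^[m] (Qleg k) := by
  cases m with
  | zero => simpa using bonnet k
  | succ j =>
    have h1 := congrArg (derivative^[j+1]) (bonnet k)
    simp only [iterate_derivative_C_mul, iterate_derivative_sub, L1] at h1
    have h2 := congrArg (derivative^[j]) (derivC k)
    rw [iterate_map_add] at h2
    simp only [iterate_derivative_C_mul, ← Function.iterate_succ_apply] at h2
    push_cast at h1 h2 ⊢
    simp only [map_add, map_mul, map_sub, map_one, map_ofNat] at h1 h2 ⊢
    linear_combination h1 - (C (j:ℝ) + 1) * h2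

lemma iteratedDeriv_polyeval (p : ℝ[X]) (n : ℕ) :
    iteratedDeriv n (fun x => p.eval x) = fun x => (derivative^[n] p).eval x := by
  induction n with
  | zero => simp
  | succ n ih =>
    rw [iteratedDeriv_succ, ih]
    funext x
    rw [Function.iterate_succ_apply']
    exact Polynomial.deriv _

lemma legP_eq (n : ℕ) : legP n = fun z => (Qleg n).eval z := by
  funext z
  unfold legP
  have h : (fun y : ℝ => (y ^ 2 - 1) ^ n) = fun y => (((X:ℝ[X])^2-1)^n).eval y := by
    funext y; simp
  rw [h, iteratedDeriv_polyeval, rodrigues]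
  have h2 : ((2:ℝ)^n * n.factorial) ≠ 0 := by positivity
  simp only [eval_mul, eval_C]
  field_simp

lemma iter_legP (n m : ℕ) :
    iteratedDeriv m (legP n) = fun z => (derivative^[m] (Qleg n)).eval z := by
  rw [legP_eq, iteratedDeriv_polyeval]

/-- Three-term recurrence of the associated Legendre polynomials:
`(ℓ - m + 1) P_{ℓ+1}^m(z) = (2ℓ+1) z P_ℓ^m(z) - (ℓ+m) P_{ℓ-1}^m(z)`
for `z ∈ [-1,1]`, `ℓ ≥ 1`, `0 ≤ m ≤ ℓ-1`. -/
theorem assocLegP_recurrence (ℓ m : ℕ) (hℓ : 1 ≤ ℓ) (hm : m ≤ ℓ - 1) :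
    ∀ z ∈ Set.Icc (-1 : ℝ) 1,
      ((ℓ : ℝ) - m + 1) * assocLegP (ℓ + 1) m z =
        (2 * ℓ + 1) * z * assocLegP ℓ m z - ((ℓ : ℝ) + m) * assocLegP (ℓ - 1) m z := by
  obtain ⟨k, rfl⟩ : ∃ k, ℓ = k + 1 := ⟨ℓ - 1, (Nat.succ_pred_eq_of_pos hℓ).symm⟩
  intro z _
  have hpr := congrArg (Polynomial.eval z) (polyRec k m)
  simp only [eval_mul, eval_sub, eval_add, eval_C, eval_X] at hpr
  simp only [assocLegP, iter_legP, Nat.add_sub_cancel, show k+1+1 = k+2 from rfl]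
  push_cast at hpr ⊢
  linear_combination ((-1:ℝ)^m * (Real.sqrt (1 - z^2))^m) * hpr
end
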